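/- For every real r ≠ 0, the complex Hermitian matrix Λ·V(r)·Λ − (i/2)Δ is not positive semidefinite; that is, the two-mode squeezed vacuum state violates Simon's separability criterion (it is entangled) whenever the squeezing parameter r is nonzero. -/

import Mathlib

open Matrix ComplexOrder

/-- Covariance matrix of the two-mode squeezed vacuum with squeezing parameter `r`. -/
noncomputable def Vtms (r : ℝ) : Matrix (Fin 4) (Fin 4) ℝ :=
  (1/2 : ℝ) • !![Real.cosh (2*r), 0, Real.sinh (2*r), 0;
                 0, Real.cosh (2*r), 0, -Real.sinh (2*r);
                 Real.sinh (2*r), 0, Real.cosh (2*r), 0;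
                 0, -Real.sinh (2*r), 0, Real.cosh (2*r)]

/-- The 4×4 symplectic form, block diagonal with blocks [[0,-1],[1,0]]. -/
def Δ4 : Matrix (Fin 4) (Fin 4) ℝ :=
  !![0,-1,0,0; 1,0,0,0; 0,0,0,-1; 0,0,1,0]

/-- Partial transposition of the second mode on covariance matrices. -/
def Λ4 : Matrix (Fin 4) (Fin 4) ℝ :=
  !![1,0,0,0; 0,1,0,0; 0,0,1,0; 0,0,0,-1]

/-- The complex Hermitian matrix `V - (i/2)Δ` built from a real 4×4 matrix `V`. -/
noncomputable def simonMatrix (V : Matrix (Fin 4) (Fin 4) ℝ) : Matrix (Fin 4) (Fin 4) ℂ :=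
  V.map (fun x => (x : ℂ)) - (Complex.I / 2) • Δ4.map (fun x => (x : ℂ))

/-- The value of the Simon quadratic form on the witness vector `(1, i, ε, εi)`. -/
lemma simon_form_eval (r ε : ℝ) :
    (star (![1, Complex.I, (ε:ℂ), (ε:ℂ)*Complex.I]) ⬝ᵥ
      (simonMatrix (Λ4 * Vtms r * Λ4)).mulVec ![1, Complex.I, (ε:ℂ), (ε:ℂ)*Complex.I])
    = ((Real.cosh (2*r) * (1 + ε^2) + 2*ε*Real.sinh (2*r) - (1 + ε^2)) : ℝ) := by
  simp [simonMatrix, Vtms, Δ4, Λ4, Matrix.mulVec, dotProduct, Fin.sum_univ_four,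
    Matrix.mul_apply, Matrix.smul_apply, Complex.ext_iff]
  have h1 : (2*(r:ℂ)) = ((2*r : ℝ):ℂ) := by push_cast; ring
  simp only [h1]
  simp [Matrix.vecHead, Matrix.vecTail, ← Complex.ofReal_pow,
    Complex.cosh_ofReal_re, Complex.cosh_ofReal_im, Complex.sinh_ofReal_re, Complex.sinh_ofReal_im]
  constructor <;> ring

theorem tmsv_entangled_of_ne_zero (r : ℝ) (hr : r ≠ 0) :
    ¬ (simonMatrix (Λ4 * Vtms r * Λ4)).PosSemidef := by
  intro h
  -- choose ε = -1 if r > 0, ε = 1 if r < 0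
  rcases lt_or_gt_of_ne hr with hneg | hpos
  · have := h.dotProduct_mulVec_nonneg (![1, Complex.I, ((1:ℝ):ℂ), ((1:ℝ):ℂ)*Complex.I])
    rw [simon_form_eval r 1] at this
    rw [Complex.zero_le_real] at this
    have hc : Real.cosh (2*r) + Real.sinh (2*r) = Real.exp (2*r) := Real.cosh_add_sinh _
    have he : Real.exp (2*r) < 1 := Real.exp_lt_one_iff.mpr (by linarith)
    nlinarith
  · have := h.dotProduct_mulVec_nonneg (![1, Complex.I, ((-1:ℝ):ℂ), ((-1:ℝ):ℂ)*Complex.I])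
    rw [simon_form_eval r (-1)] at this
    rw [Complex.zero_le_real] at this
    have hc : Real.cosh (2*r) - Real.sinh (2*r) = Real.exp (-(2*r)) := Real.cosh_sub_sinh _
    have he : Real.exp (-(2*r)) < 1 := Real.exp_lt_one_iff.mpr (by linarith)
    nlinarith
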